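/- Suppose the self-dualizing inner product ⟨·,·⟩ satisfies: ⟨a,b⟩ ≥ 0 for all states, ⟨w,w⟩ = 1 for pure states, maximal frames sum to the order unit (so for maximal frames {w_j}, {w'_i}: ∑_j ⟨w'_i, w_j⟩ = 1 and ∑_i ⟨w'_i, w_j⟩ = 1), and frame elements are orthonormal. If a state w has two decompositions w = ∑_j p_j w_j = ∑_i q_i w'_i into maximal frames with probability coefficients, then the probability vector q is a permutation of p; consequently the entropy −∑ p_j ln p_j is well-defined, independent of the classical decomposition. -/

import Mathlib

open scoped RealInnerProductSpace

/-- Glue fiberwise card equalities into a permutation. -/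
lemma exists_perm_of_fiber_card_eq {n : ℕ} {α : Type*} (f g : Fin n → α)
    [DecidableEq α]
    (h : ∀ v, (Finset.univ.filter fun i => f i = v).card
        = (Finset.univ.filter fun j => g j = v).card) :
    ∃ σ : Equiv.Perm (Fin n), ∀ i, f i = g (σ i) := by
  have hcard : ∀ v : α, Fintype.card {i // f i = v} = Fintype.card {j // g j = v} := by
    intro v
    simp only [Fintype.card_subtype]
    exact h v
  classical
  have fibEquiv : ∀ v : α, {i // f i = v} ≃ {j // g j = v} := fun v =>
    Fintype.equivOfCardEq (hcard v)
  let σ : Fin n ≃ Fin n :=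
    (Equiv.sigmaFiberEquiv f).symm.trans
      ((Equiv.sigmaCongrRight fibEquiv).trans (Equiv.sigmaFiberEquiv g))
  refine ⟨σ, fun i => ?_⟩
  have : σ i = (fibEquiv (f i) ⟨i, rfl⟩ : {j // g j = f i}) := rfl
  rw [this]
  exact ((fibEquiv (f i) ⟨i, rfl⟩).2).symm

/-- Well-definedness of the thermodynamic entropy: if a state has two decompositions into
maximal frames (orthonormal families of unit vectors with nonnegative pairwise inner
products whose Gram matrix is doubly stochastic) with probability coefficients `p` and
`q`, then `q` is a permutation of `p`, and hence the entropy `−∑ p_j ln p_j` does not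
depend on the choice of classical decomposition. -/
theorem entropy_well_defined {A : Type*} [NormedAddCommGroup A] [InnerProductSpace ℝ A]
    [FiniteDimensional ℝ A] {n : ℕ} (w : A) (w1 w2 : Fin n → A)
    (h1 : Orthonormal ℝ w1) (h2 : Orthonormal ℝ w2)
    (hnn : ∀ i j, 0 ≤ ⟪w2 i, w1 j⟫)
    (hrow : ∀ i, ∑ j, ⟪w2 i, w1 j⟫ = 1) (hcol : ∀ j, ∑ i, ⟪w2 i, w1 j⟫ = 1)
    (p q : Fin n → ℝ) (hp : ∀ j, 0 ≤ p j) (hps : ∑ j, p j = 1)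
    (hq : ∀ i, 0 ≤ q i) (hqs : ∑ i, q i = 1)
    (hdp : w = ∑ j, p j • w1 j) (hdq : w = ∑ i, q i • w2 i) :
    ∃ σ : Equiv.Perm (Fin n), (∀ i, q i = p (σ i)) ∧
      ∑ i, Real.negMulLog (q i) = ∑ j, Real.negMulLog (p j) := by
  classical
  set R : Fin n → Fin n → ℝ := fun i j => ⟪w2 i, w1 j⟫ with hR
  -- q i = ∑ j, R i j * p j
  have hqe : ∀ i, q i = ∑ j, R i j * p j := by
    intro i
    have e1 : ⟪w2 i, w⟫ = q i := by
      rw [hdq, inner_sum]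
      simp only [real_inner_smul_right]
      rw [Finset.sum_eq_single i]
      · simp [h2.inner_left_right_finset, orthonormal_iff_ite.mp h2, h2.1 i]
      · intro b _ hb
        rw [orthonormal_iff_ite.mp h2]
        simp [hb.symm]
      · simp
    have e2 : ⟪w2 i, w⟫ = ∑ j, R i j * p j := by
      rw [hdp, inner_sum]
      simp only [real_inner_smul_right, hR]
      exact Finset.sum_congr rfl fun j _ => mul_comm _ _
    rw [← e1, e2]
  have hpe : ∀ j, p j = ∑ i, R i j * q i := by
    intro j
    have e1 : ⟪w1 j, w⟫ = p j := by
      rw [hdp, inner_sum]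
      simp only [real_inner_smul_right]
      rw [Finset.sum_eq_single j]
      · simp [orthonormal_iff_ite.mp h1, h1.1 j]
      · intro b _ hb
        rw [orthonormal_iff_ite.mp h1]
        simp [hb.symm]
      · simp
    have e2 : ⟪w1 j, w⟫ = ∑ i, R i j * q i := by
      rw [hdq, inner_sum]
      simp only [real_inner_smul_right, hR]
      refine Finset.sum_congr rfl fun i _ => ?_
      rw [real_inner_comm]; ring
    rw [← e1, e2]
  -- key sum is zero
  have hzero : ∑ i, ∑ j, R i j * (p j - q i) ^ 2 = 0 := by
    have expand : ∀ i j, R i j * (p j - q i) ^ 2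
        = R i j * (p j)^2 + R i j * (q i)^2 - (R i j * p j * q i + R i j * p j * q i) := by
      intro i j; ring
    simp only [expand, Finset.sum_sub_distrib]
    · have t1 : ∑ i, ∑ j, (R i j * (p j)^2 + R i j * (q i)^2)
          = ∑ j, (p j)^2 + ∑ i, (q i)^2 := by
        simp only [Finset.sum_add_distrib]
        congr 1
        · rw [Finset.sum_comm]
          refine Finset.sum_congr rfl fun j _ => ?_
          rw [← Finset.sum_mul, hcol j, one_mul]
        · refine Finset.sum_congr rfl fun i _ => ?_
          rw [← Finset.sum_mul, hrow i, one_mul]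
      have X1 : ∑ i, ∑ j, R i j * p j * q i = ∑ j, (p j)^2 := by
        rw [Finset.sum_comm]
        refine Finset.sum_congr rfl fun j _ => ?_
        have : ∑ i, R i j * p j * q i = p j * ∑ i, R i j * q i := by
          rw [Finset.mul_sum]; exact Finset.sum_congr rfl fun i _ => by ring
        rw [this, ← hpe j, sq]
      have X2 : ∑ i, ∑ j, R i j * p j * q i = ∑ i, (q i)^2 := by
        refine Finset.sum_congr rfl fun i _ => ?_
        have : ∑ j, R i j * p j * q i = q i * ∑ j, R i j * p j := by
          rw [Finset.mul_sum]; exact Finset.sum_congr rfl fun j _ => by ring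
        rw [this, ← hqe i, sq]
      have t2 : ∑ i, ∑ j, (R i j * p j * q i + R i j * p j * q i)
          = ∑ j, (p j)^2 + ∑ i, (q i)^2 := by
        simp only [Finset.sum_add_distrib]
        nth_rewrite 2 [X2]
        rw [X1]
      rw [t1, t2, sub_self]
  -- each term vanishes
  have hkey : ∀ i j, R i j ≠ 0 → q i = p j := by
    intro i j hne
    have hnonneg : ∀ k ∈ Finset.univ, (0:ℝ) ≤ ∑ l, R k l * (p l - q k) ^ 2 := by
      intro k _
      exact Finset.sum_nonneg fun l _ => mul_nonneg (hnn k l) (sq_nonneg _)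
    have h1' := (Finset.sum_eq_zero_iff_of_nonneg hnonneg).mp hzero i (Finset.mem_univ i)
    have hnonneg2 : ∀ l ∈ Finset.univ, (0:ℝ) ≤ R i l * (p l - q i) ^ 2 :=
      fun l _ => mul_nonneg (hnn i l) (sq_nonneg _)
    have h2' := (Finset.sum_eq_zero_iff_of_nonneg hnonneg2).mp h1' j (Finset.mem_univ j)
    rcases mul_eq_zero.mp h2' with h | h
    · exact absurd h hne
    · have := pow_eq_zero_iff (n := 2) (by norm_num) |>.mp h
      linarith [sub_eq_zero.mp this]
  -- fiber counting
  have hcount : ∀ v : ℝ, (Finset.univ.filter fun i => q i = v).card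
      = (Finset.univ.filter fun j => p j = v).card := by
    intro v
    have hQ : ((Finset.univ.filter fun i => q i = v).card : ℝ)
        = ∑ i ∈ Finset.univ.filter fun i => q i = v,
            ∑ j ∈ Finset.univ.filter fun j => p j = v, R i j := by
      rw [Finset.card_eq_sum_ones, Nat.cast_sum]
      refine Finset.sum_congr rfl fun i hi => ?_
      have hqi : q i = v := (Finset.mem_filter.mp hi).2
      have : ∑ j ∈ Finset.univ.filter fun j => p j = v, R i j = ∑ j, R i j := by
        refine Finset.sum_subset (Finset.filter_subset _ _) fun j _ hj => ?_
        by_contra hne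
        have := hkey i j hne
        exact hj (Finset.mem_filter.mpr ⟨Finset.mem_univ j, by rw [← this, hqi]⟩)
      rw [this, hrow i]; norm_num
    have hP : ((Finset.univ.filter fun j => p j = v).card : ℝ)
        = ∑ i ∈ Finset.univ.filter fun i => q i = v,
            ∑ j ∈ Finset.univ.filter fun j => p j = v, R i j := by
      rw [Finset.card_eq_sum_ones, Nat.cast_sum, Finset.sum_comm]
      refine Finset.sum_congr rfl fun j hj => ?_
      have hpj : p j = v := (Finset.mem_filter.mp hj).2
      have : ∑ i ∈ Finset.univ.filter fun i => q i = v, R i j = ∑ i, R i j := by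
        refine Finset.sum_subset (Finset.filter_subset _ _) fun i _ hi => ?_
        by_contra hne
        have := hkey i j hne
        exact hi (Finset.mem_filter.mpr ⟨Finset.mem_univ i, by rw [this, hpj]⟩)
      rw [this, hcol j]; norm_num
    exact_mod_cast hQ.trans hP.symm
  obtain ⟨σ, hσ⟩ := exists_perm_of_fiber_card_eq q p hcount
  refine ⟨σ, hσ, ?_⟩
  calc ∑ i, Real.negMulLog (q i) = ∑ i, Real.negMulLog (p (σ i)) := by
        exact Finset.sum_congr rfl fun i _ => by rw [hσ i]
    _ = ∑ j, Real.negMulLog (p j) := Equiv.sum_comp σ (fun j => Real.negMulLog (p j))
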